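/- In a two-terminal series-parallel graph viewed via its binary decomposition tree, for any two s-t flows f and f̃ (nonnegative edge vectors satisfying flow conservation with the same source s and sink t): if there is no (f, f̃)-good pair of subgraphs, then (i) val(f) = val(f̃) implies f = f̃; (ii) val(f) > val(f̃) implies f_e ≥ f̃_e on every edge; (iii) val(f) < val(f̃) implies f_e ≤ f̃_e on every edge. -/
import Mathlib


/-- Two-terminal series-parallel graphs, given by their binary decomposition tree. -/
inductive SPG : Type
  | edge : SPG
  | series : SPG → SPG → SPG
  | parallel : SPG → SPG → SPG

namespace SPG

/-- The edge set of a series-parallel graph (the leaves of the decomposition tree). -/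
def E : SPG → Type
  | .edge => Unit
  | .series a b => a.E ⊕ b.E
  | .parallel a b => a.E ⊕ b.E

/-- The value (between the two terminals) of an edge vector on a series-parallel graph. -/
def val : (G : SPG) → (G.E → ℝ) → ℝ
  | .edge, f => f ()
  | .series a _, f => a.val (f ∘ Sum.inl)
  | .parallel a b, f => a.val (f ∘ Sum.inl) + b.val (f ∘ Sum.inr)

/-- `f` is an `s`-`t` flow on the series-parallel graph `G`: it is nonnegative and
satisfies flow conservation (in a series join both parts carry the same value). -/
def IsFlow : (G : SPG) → (G.E → ℝ) → Prop
  | .edge, f => 0 ≤ f ()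
  | .series a b, f => a.IsFlow (f ∘ Sum.inl) ∧ b.IsFlow (f ∘ Sum.inr) ∧
      a.val (f ∘ Sum.inl) = b.val (f ∘ Sum.inr)
  | .parallel a b, f => a.IsFlow (f ∘ Sum.inl) ∧ b.IsFlow (f ∘ Sum.inr)

/-- There is an `(f, f̃)`-good pair of subgraphs of `G`: two subgraphs `H₁`, `H₂`
whose parallel join is a node of the decomposition tree, with `f ≥ f̃` edgewise on
`H₁`, `f ≤ f̃` edgewise on `H₂`, `val(f_{H₁}) > val(f̃_{H₁})` and
`val(f_{H₂}) < val(f̃_{H₂})`. -/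
def GoodPair : (G : SPG) → (G.E → ℝ) → (G.E → ℝ) → Prop
  | .edge, _, _ => False
  | .series a b, f, g =>
      a.GoodPair (f ∘ Sum.inl) (g ∘ Sum.inl) ∨ b.GoodPair (f ∘ Sum.inr) (g ∘ Sum.inr)
  | .parallel a b, f, g =>
      a.GoodPair (f ∘ Sum.inl) (g ∘ Sum.inl) ∨ b.GoodPair (f ∘ Sum.inr) (g ∘ Sum.inr) ∨
      ((∀ e, g (Sum.inl e) ≤ f (Sum.inl e)) ∧ (∀ e, f (Sum.inr e) ≤ g (Sum.inr e)) ∧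
        a.val (g ∘ Sum.inl) < a.val (f ∘ Sum.inl) ∧ b.val (f ∘ Sum.inr) < b.val (g ∘ Sum.inr)) ∨
      ((∀ e, g (Sum.inr e) ≤ f (Sum.inr e)) ∧ (∀ e, f (Sum.inl e) ≤ g (Sum.inl e)) ∧
        b.val (g ∘ Sum.inr) < b.val (f ∘ Sum.inr) ∧ a.val (f ∘ Sum.inl) < a.val (g ∘ Sum.inl))

end SPG

/-- Claim 4.3: trichotomy for `s`-`t` flows on a series-parallel graph. If there is
no `(f, f̃)`-good pair of subgraphs, then equal values force `f = f̃`, larger value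
forces edgewise domination `f ≥ f̃`, and smaller value forces `f ≤ f̃`. -/
theorem spg_flow_trichotomy (G : SPG) (f ft : G.E → ℝ)
    (hf : G.IsFlow f) (hft : G.IsFlow ft) (hng : ¬ G.GoodPair f ft) :
    (G.val f = G.val ft → f = ft) ∧
    (G.val ft < G.val f → ∀ e, ft e ≤ f e) ∧
    (G.val f < G.val ft → ∀ e, f e ≤ ft e) := by
  induction G with
  | edge =>
    refine ⟨fun h => funext fun e => ?_, fun h e => ?_, fun h e => ?_⟩
    · cases e; exact h
    · cases e; exact h.le
    · cases e; exact h.le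
  | series a b iha ihb =>
    obtain ⟨hfa, hfb, hfv⟩ := hf
    obtain ⟨hga, hgb, hgv⟩ := hft
    simp only [SPG.GoodPair] at hng
    push_neg at hng
    obtain ⟨hna, hnb⟩ := hng
    obtain ⟨A1, A2, A3⟩ := iha _ _ hfa hga hna
    obtain ⟨B1, B2, B3⟩ := ihb _ _ hfb hgb hnb
    simp only [SPG.val]
    refine ⟨fun h => ?_, fun h e => ?_, fun h e => ?_⟩
    · have ha := A1 h
      have hb := B1 (by rw [← hfv, ← hgv]; exact h)
      funext e
      cases e with
      | inl e => exact congrFun ha e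
      | inr e => exact congrFun hb e
    · cases e with
      | inl e => exact A2 h e
      | inr e => exact B2 (by rw [← hfv, ← hgv]; exact h) e
    · cases e with
      | inl e => exact A3 h e
      | inr e => exact B3 (by rw [← hfv, ← hgv]; exact h) e
  | parallel a b iha ihb =>
    obtain ⟨hfa, hfb⟩ := hf
    obtain ⟨hga, hgb⟩ := hft
    simp only [SPG.GoodPair] at hng
    have hna : ¬ a.GoodPair (f ∘ Sum.inl) (ft ∘ Sum.inl) := fun h => hng (Or.inl h)
    have hnb : ¬ b.GoodPair (f ∘ Sum.inr) (ft ∘ Sum.inr) := fun h => hng (Or.inr (Or.inl h))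
    obtain ⟨A1, A2, A3⟩ := iha _ _ hfa hga hna
    obtain ⟨B1, B2, B3⟩ := ihb _ _ hfb hgb hnb
    simp only [SPG.val]
    have hC : ¬ (a.val (ft ∘ Sum.inl) < a.val (f ∘ Sum.inl) ∧
        b.val (f ∘ Sum.inr) < b.val (ft ∘ Sum.inr)) := by
      rintro ⟨h1, h2⟩
      exact hng (Or.inr (Or.inr (Or.inl ⟨fun e => A2 h1 e, fun e => B3 h2 e, h1, h2⟩)))
    have hD : ¬ (b.val (ft ∘ Sum.inr) < b.val (f ∘ Sum.inr) ∧
        a.val (f ∘ Sum.inl) < a.val (ft ∘ Sum.inl)) := by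
      rintro ⟨h1, h2⟩
      exact hng (Or.inr (Or.inr (Or.inr ⟨fun e => B2 h1 e, fun e => A3 h2 e, h1, h2⟩)))
    refine ⟨fun h => ?_, fun h e => ?_, fun h e => ?_⟩
    · have hav : a.val (f ∘ Sum.inl) = a.val (ft ∘ Sum.inl) := by
        rcases lt_trichotomy (a.val (f ∘ Sum.inl)) (a.val (ft ∘ Sum.inl)) with h1 | h1 | h1
        · exact absurd ⟨by linarith, h1⟩ hD
        · exact h1
        · exact absurd ⟨h1, by linarith⟩ hC
      have hbv : b.val (f ∘ Sum.inr) = b.val (ft ∘ Sum.inr) := by linarith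
      have ha := A1 hav
      have hb := B1 hbv
      funext e
      cases e with
      | inl e => exact congrFun ha e
      | inr e => exact congrFun hb e
    · have hav : a.val (ft ∘ Sum.inl) ≤ a.val (f ∘ Sum.inl) := by
        by_contra h1
        push_neg at h1
        exact hD ⟨by linarith, h1⟩
      have hbv : b.val (ft ∘ Sum.inr) ≤ b.val (f ∘ Sum.inr) := by
        by_contra h1
        push_neg at h1
        exact hC ⟨by linarith, h1⟩
      cases e with
      | inl e =>
        rcases hav.lt_or_eq with h1 | h1
        · exact A2 h1 e
        · exact (congrFun (A1 h1.symm) e).ge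
      | inr e =>
        rcases hbv.lt_or_eq with h1 | h1
        · exact B2 h1 e
        · exact (congrFun (B1 h1.symm) e).ge
    · have hav : a.val (f ∘ Sum.inl) ≤ a.val (ft ∘ Sum.inl) := by
        by_contra h1
        push_neg at h1
        exact hC ⟨h1, by linarith⟩
      have hbv : b.val (f ∘ Sum.inr) ≤ b.val (ft ∘ Sum.inr) := by
        by_contra h1
        push_neg at h1
        exact hD ⟨h1, by linarith⟩
      cases e with
      | inl e =>
        rcases hav.lt_or_eq with h1 | h1
        · exact A3 h1 e
        · exact (congrFun (A1 h1) e).le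
      | inr e =>
        rcases hbv.lt_or_eq with h1 | h1
        · exact B3 h1 e
        · exact (congrFun (B1 h1) e).le
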